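/- Let ρ : ℝ → ℝ be the Dickman function, i.e. ρ is continuous, ρ(x) = 1 for x ≤ 1 (and ρ(x) = 1 for 0 ≤ x ≤ 1), and ρ is differentiable on (1,∞) with x ρ′(x) = −ρ(x−1) for all x > 1. Then ∫_{0}^{∞} ρ(u) du = e^{γ}. Equivalently, the probability measure with cumulative distribution function 1 − ρ has mean e^{γ}. -/

import Mathlib

open Filter MeasureTheory

set_option linter.unusedSectionVars false
set_option maxHeartbeats 1000000
section Aux
open intervalIntegral Real Set Topology

lemma pow_int : ∀ k : ℕ, ∫ u in (0:ℝ)..1, (1-u)^k = ((k:ℝ)+1)⁻¹ := by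
  intro k
  have := intervalIntegral.integral_comp_sub_left (a := (0:ℝ)) (b := 1) (fun u => u ^ k) 1
  simp only [sub_zero, sub_self] at this
  rw [this, integral_pow]
  norm_num

lemma harmonic_eq (n : ℕ) : (harmonic n : ℝ) = ∫ u in (0:ℝ)..1, (1 - (1-u)^n)/u := by
  have hae : ∀ᵐ u ∂(volume : Measure ℝ), u ∈ Set.uIoc (0:ℝ) 1 →
      (1 - (1-u)^n)/u = ∑ k ∈ Finset.range n, (1-u)^k := by
    filter_upwards with u hu
    have hu0 : u ≠ 0 := by
      rcases Set.mem_uIoc.1 hu with h | h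
      · exact ne_of_gt h.1
      · nlinarith [h.1, h.2]
    have : (1 - u) ≠ 1 := by simpa using hu0
    rw [geom_sum_eq this, show (1:ℝ)-u-1 = -u by ring, div_neg, ← neg_div, neg_sub]
  rw [intervalIntegral.integral_congr_ae hae, intervalIntegral.integral_finset_sum
    (fun k _ => (Continuous.intervalIntegrable (by continuity) 0 1))]
  simp only [pow_int]
  rw [harmonic]
  push_cast
  norm_num

lemma subst_eq (n : ℕ) (hn : 0 < n) :
    ∫ t in (0:ℝ)..(n:ℝ), (1-(1-t/n)^n)/t = ∫ u in (0:ℝ)..1, (1-(1-u)^n)/u := by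
  have hc : (n:ℝ) ≠ 0 := Nat.cast_ne_zero.2 hn.ne'
  have h := intervalIntegral.integral_comp_div (a := 0) (b := (n:ℝ)) (c := (n:ℝ))
    (fun u => (1-(1-u)^n)/u) hc
  simp only [zero_div, div_self hc, smul_eq_mul] at h
  have key : ∀ t : ℝ, (1-(1-t/(n:ℝ))^n)/t = (n:ℝ)⁻¹ * ((1-(1-t/n)^n)/(t/n)) := by
    intro t
    rw [div_div_eq_mul_div, mul_comm (1-(1-t/(n:ℝ))^n) (n:ℝ), ← mul_div_assoc, ← mul_assoc,
      inv_mul_cancel₀ hc, one_mul]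
  simp only [key]
  rw [intervalIntegral.integral_const_mul, h, ← mul_assoc, inv_mul_cancel₀ hc, one_mul]

lemma bound01 (n : ℕ) (hn : 1 ≤ n) {t : ℝ} (ht : t ∈ Set.Ioc (0:ℝ) 1) :
    0 ≤ (1-(1-t/n)^n)/t ∧ (1-(1-t/n)^n)/t ≤ 1 := by
  have hc : (0:ℝ) < n := by exact_mod_cast hn
  have h1 : (1:ℝ) - t/n ≤ 1 := by
    have : 0 ≤ t/n := div_nonneg ht.1.le hc.le
    linarith
  have h0 : (0:ℝ) ≤ 1 - t/n := by
    have : t/n ≤ 1 := by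
      rw [div_le_one hc]
      calc t ≤ 1 := ht.2
      _ ≤ n := by exact_mod_cast hn
    linarith
  have hup : (1-t/n)^n ≤ 1 := pow_le_one₀ h0 h1
  have hlo : 1 - t ≤ (1-t/n)^n := by
    have := one_add_mul_le_pow (a := -(t/n)) (by nlinarith [div_nonneg ht.1.le hc.le]) n
    have hnt : (n:ℝ) * (t/n) = t := by field_simp
    calc 1 - t = 1 + (n:ℝ) * -(t/n) := by rw [mul_neg, hnt]; ring
    _ ≤ (1 + -(t/n))^n := this
    _ = (1 - t/n)^n := by ring_nf
  constructor
  · apply div_nonneg (by linarith) ht.1.le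
  · rw [div_le_one ht.1]; linarith

lemma bound1n (n : ℕ) {t : ℝ} (ht : 1 ≤ t) (htn : t ≤ n) :
    0 ≤ (1-t/n)^n/t ∧ (1-t/n)^n/t ≤ Real.exp (-t) := by
  have hc : (0:ℝ) < n := lt_of_lt_of_le zero_lt_one (le_trans ht htn)
  have h0 : (0:ℝ) ≤ 1 - t/n := by
    have : t/n ≤ 1 := by rw [div_le_one hc]; exact htn
    linarith
  have hup : (1-t/n)^n ≤ Real.exp (-t) := one_sub_div_pow_le_exp_neg htn
  have ht0 : (0:ℝ) < t := lt_of_lt_of_le zero_lt_one ht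
  refine ⟨div_nonneg (pow_nonneg h0 n) ht0.le, ?_⟩
  calc (1-t/n)^n/t ≤ Real.exp (-t)/t := by gcongr
  _ ≤ Real.exp (-t) := div_le_self (Real.exp_nonneg _) ht

lemma meas_gn (n : ℕ) : Measurable (fun t : ℝ => (1-(1-t/n)^n)/t) := by
  apply Measurable.div <;> fun_prop

lemma intInt01 (n : ℕ) (hn : 1 ≤ n) :
    IntervalIntegrable (fun t : ℝ => (1-(1-t/n)^n)/t) volume 0 1 := by
  rw [intervalIntegrable_iff, Set.uIoc_of_le zero_le_one]
  apply Integrable.mono' (integrable_const (1:ℝ)) (meas_gn n).aestronglyMeasurable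
  rw [ae_restrict_iff' measurableSet_Ioc]
  filter_upwards with t ht
  rw [Real.norm_eq_abs, abs_of_nonneg (bound01 n hn ht).1]
  exact (bound01 n hn ht).2

lemma contOn_pos {n : ℕ} {a b : ℝ} (ha : 0 < a) (hab : a ≤ b) :
    ContinuousOn (fun t : ℝ => (1-(1-t/n)^n)/t) (Set.uIcc a b) := by
  apply ContinuousOn.div (by fun_prop) continuousOn_id
  intro t ht
  rw [Set.uIcc_of_le hab] at ht
  exact ne_of_gt (lt_of_lt_of_le ha ht.1)

lemma Hn_eq (n : ℕ) (hn : 1 ≤ n) :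
    (harmonic n : ℝ) - Real.log n =
      (∫ t in (0:ℝ)..1, (1-(1-t/n)^n)/t) - ∫ t in (1:ℝ)..(n:ℝ), (1-t/n)^n/t := by
  have hn1 : (1:ℝ) ≤ n := by exact_mod_cast hn
  have h1n : IntervalIntegrable (fun t : ℝ => (1-(1-t/n)^n)/t) volume 1 n :=
    (contOn_pos zero_lt_one hn1).intervalIntegrable
  have hinv : IntervalIntegrable (fun t : ℝ => 1/t) volume 1 n := by
    apply ContinuousOn.intervalIntegrable
    apply ContinuousOn.div continuousOn_const continuousOn_id
    intro t ht
    rw [Set.uIcc_of_le hn1] at ht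
    exact ne_of_gt (lt_of_lt_of_le zero_lt_one ht.1)
  have hlog : Real.log n = ∫ t in (1:ℝ)..(n:ℝ), 1/t := by
    rw [integral_one_div]
    · rw [div_one]
    · rw [Set.uIcc_of_le hn1]
      intro h
      exact absurd h.1 (by norm_num)
  have hsplit : (harmonic n : ℝ) =
      (∫ t in (0:ℝ)..1, (1-(1-t/n)^n)/t) + ∫ t in (1:ℝ)..(n:ℝ), (1-(1-t/n)^n)/t := by
    rw [harmonic_eq, ← subst_eq n hn,
      ← intervalIntegral.integral_add_adjacent_intervals (intInt01 n hn) h1n]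
  have hdiff : ∫ t in (1:ℝ)..(n:ℝ), (1-t/n)^n/t
      = (∫ t in (1:ℝ)..(n:ℝ), 1/t) - ∫ t in (1:ℝ)..(n:ℝ), (1-(1-t/n)^n)/t := by
    rw [← intervalIntegral.integral_sub hinv h1n]
    apply intervalIntegral.integral_congr
    intro t ht
    rw [Set.uIcc_of_le hn1] at ht
    have ht0 : t ≠ 0 := ne_of_gt (lt_of_lt_of_le zero_lt_one ht.1)
    field_simp
    ring
  rw [hsplit, hlog, hdiff]
  ring

lemma lim1 : Tendsto (fun n : ℕ => ∫ t in (0:ℝ)..1, (1-(1-t/n)^n)/t) atTop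
    (𝓝 (∫ t in (0:ℝ)..1, (1-Real.exp (-t))/t)) := by
  simp only [intervalIntegral.integral_of_le zero_le_one]
  apply MeasureTheory.tendsto_integral_filter_of_dominated_convergence (bound := fun _ => (1:ℝ))
  · filter_upwards with n
    exact (meas_gn n).aestronglyMeasurable.restrict
  · filter_upwards [eventually_ge_atTop 1] with n hn
    rw [ae_restrict_iff' measurableSet_Ioc]
    filter_upwards with t ht
    rw [Real.norm_eq_abs, abs_of_nonneg (bound01 n hn ht).1]
    exact (bound01 n hn ht).2
  · exact integrableOn_const (by simp)
  · rw [ae_restrict_iff' measurableSet_Ioc]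
    filter_upwards with t ht
    have h := (Real.tendsto_one_add_div_pow_exp (-t)).const_sub (1:ℝ)
    have h2 := h.div_const t
    simpa only [neg_div, ← sub_eq_add_neg] using h2

lemma lim2 : Tendsto (fun n : ℕ => ∫ t in (1:ℝ)..(n:ℝ), (1-t/n)^n/t) atTop
    (𝓝 (∫ t in Set.Ioi (1:ℝ), Real.exp (-t)/t)) := by
  have key : Tendsto (fun n : ℕ => ∫ t in Set.Ioi (1:ℝ),
      (Set.Ioc (1:ℝ) (n:ℝ)).indicator (fun t => (1-t/n)^n/t) t) atTop
      (𝓝 (∫ t in Set.Ioi (1:ℝ), Real.exp (-t)/t)) := by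
    apply MeasureTheory.tendsto_integral_filter_of_dominated_convergence (bound := fun t => Real.exp (-t))
    · filter_upwards with n
      apply AEStronglyMeasurable.restrict
      apply (Measurable.indicator (by fun_prop) measurableSet_Ioc).aestronglyMeasurable
    · filter_upwards with n
      rw [ae_restrict_iff' measurableSet_Ioi]
      filter_upwards with t ht
      by_cases ht' : t ∈ Set.Ioc (1:ℝ) (n:ℝ)
      · rw [Set.indicator_of_mem ht']
        rw [Real.norm_eq_abs, abs_of_nonneg (bound1n n ht'.1.le ht'.2).1]
        exact (bound1n n ht'.1.le ht'.2).2
      · rw [Set.indicator_of_notMem ht']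
        simp [Real.exp_nonneg]
    · have := exp_neg_integrableOn_Ioi (1:ℝ) zero_lt_one
      simp only [neg_mul, one_mul] at this; exact this
    · rw [ae_restrict_iff' measurableSet_Ioi]
      filter_upwards with t ht
      apply Tendsto.congr' (f₁ := fun n : ℕ => (1-t/n)^n/t)
      · filter_upwards [eventually_ge_atTop ⌈t⌉₊] with n hn
        have htn : t ≤ (n:ℝ) := le_trans (Nat.le_ceil t) (by exact_mod_cast hn)
        rw [Set.indicator_of_mem (Set.mem_Ioc.mpr ⟨Set.mem_Ioi.1 ht, htn⟩)]
      · have h2 := (Real.tendsto_one_add_div_pow_exp (-t)).div_const t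
        simpa only [neg_div, ← sub_eq_add_neg] using h2
  apply key.congr'
  filter_upwards [eventually_ge_atTop 1] with n hn
  have hn1 : (1:ℝ) ≤ n := by exact_mod_cast hn
  rw [setIntegral_indicator measurableSet_Ioc,
    Set.inter_eq_self_of_subset_right Set.Ioc_subset_Ioi_self,
    ← intervalIntegral.integral_of_le hn1]

lemma gamma_id : Real.eulerMascheroniConstant =
    (∫ t in (0:ℝ)..1, (1-Real.exp (-t))/t) - ∫ t in Set.Ioi (1:ℝ), Real.exp (-t)/t := by
  apply tendsto_nhds_unique Real.tendsto_harmonic_sub_log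
  apply Tendsto.congr' _ (lim1.sub lim2)
  filter_upwards [eventually_ge_atTop 1] with n hn
  exact (Hn_eq n hn).symm


section rho
variable {ρ : ℝ → ℝ} (hρc : Continuous ρ) (hρ1 : ∀ x : ℝ, x ≤ 1 → ρ x = 1)
  (hρdiff : ∀ x : ℝ, 1 < x → DifferentiableAt ℝ ρ x)
  (hρeq : ∀ x : ℝ, 1 < x → x * deriv ρ x = -ρ (x - 1))

include hρc hρ1 hρdiff hρeq

lemma rho_int_id : ∀ x : ℝ, 1 ≤ x → x * ρ x = ∫ t in (x-1)..x, ρ t := by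
  have hGd : ∀ y : ℝ, HasDerivAt (fun y => ∫ t in (0:ℝ)..y, ρ t) (ρ y) y := fun y =>
    intervalIntegral.integral_hasDerivAt_right (hρc.intervalIntegrable _ _)
      (hρc.stronglyMeasurableAtFilter _ _) hρc.continuousAt
  set G : ℝ → ℝ := fun y => ∫ t in (0:ℝ)..y, ρ t with hG
  have hGc : Continuous G := continuous_iff_continuousAt.2 fun y => (hGd y).continuousAt
  have hgrep : ∀ x : ℝ, (∫ t in (x-1)..x, ρ t) = G x - G (x-1) := by
    intro x
    rw [hG]
    rw [← intervalIntegral.integral_interval_sub_left (hρc.intervalIntegrable _ _)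
      (hρc.intervalIntegrable _ _)]
  -- the difference function
  set h : ℝ → ℝ := fun x => x * ρ x - (G x - G (x-1)) with hh
  have hhc : Continuous h := by
    apply Continuous.sub (by fun_prop)
    exact hGc.sub (hGc.comp (by fun_prop))
  have hder : ∀ x : ℝ, 1 < x → HasDerivAt h 0 x := by
    intro x hx
    have h1 : HasDerivAt (fun x : ℝ => x * ρ x) (ρ x - ρ (x-1)) x := by
      have := (hasDerivAt_id x).fun_mul (hρdiff x hx).hasDerivAt
      rw [one_mul] at this
      refine this.congr_deriv ?_
      have h3 := hρeq x hx
      simp only [id_eq]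
      linarith
    have h2 : HasDerivAt (fun x : ℝ => G x - G (x-1)) (ρ x - ρ (x-1)) x := by
      apply (hGd x).sub
      have := (hGd (x-1)).comp x ((hasDerivAt_id x).sub_const 1)
      simpa [Function.comp_def] using this
    have := h1.fun_sub h2
    simpa using this
  have key : ∀ x : ℝ, 1 < x → h x = h 1 := by
    intro x hx
    have step : ∀ a, 1 < a → a ≤ x → h x = h a := by
      intro a ha hax
      have := eq_of_has_deriv_right_eq (f := h) (g := fun _ => h a) (f' := fun _ => 0)
        (a := a) (b := x)
        (fun y hy => (hder y (lt_of_lt_of_le ha hy.1)).hasDerivWithinAt)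
        (fun y _ => (hasDerivAt_const y (h a)).hasDerivWithinAt)
        hhc.continuousOn continuousOn_const rfl
      exact this x ⟨hax, le_refl x⟩
    have htend : Tendsto (fun a => h a) (𝓝[>] (1:ℝ)) (𝓝 (h 1)) :=
      (hhc.continuousAt).continuousWithinAt.tendsto
    have hconst : (fun a => h a) =ᶠ[𝓝[>] (1:ℝ)] (fun _ => h x) := by
      have : Set.Ioo (1:ℝ) x ∈ 𝓝[>] (1:ℝ) := Ioo_mem_nhdsGT_of_mem ⟨le_refl 1, hx⟩
      filter_upwards [this] with a ha
      exact (step a ha.1 ha.2.le).symm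
    have := htend.congr' hconst
    exact (tendsto_nhds_unique this tendsto_const_nhds).symm
  intro x hx
  have h1val : h 1 = 0 := by
    have : (∫ t in (0:ℝ)..1, ρ t) = ∫ t in (0:ℝ)..1, (1:ℝ) := by
      apply intervalIntegral.integral_congr
      intro t ht
      rw [Set.uIcc_of_le zero_le_one] at ht
      exact hρ1 t ht.2
    simp only [hh, hG]
    rw [hρ1 1 le_rfl, this]
    simp
  rcases eq_or_lt_of_le hx with rfl | hx'
  · rw [hgrep]
    have := h1val
    simp only [hh] at this
    linarith
  · have := key x hx'
    rw [h1val] at this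
    simp only [hh] at this
    rw [hgrep]
    linarith

lemma rho_nonneg : ∀ x : ℝ, 0 ≤ ρ x := by
  by_contra hcon
  push_neg at hcon
  obtain ⟨z, hz⟩ := hcon
  set S : Set ℝ := {x | ρ x ≤ 0} with hS
  have hSne : S.Nonempty := ⟨z, hz.le⟩
  have hSsub : ∀ y ∈ S, (1:ℝ) ≤ y := by
    intro y hy
    by_contra hy1
    push_neg at hy1
    rw [Set.mem_setOf_eq, hρ1 y hy1.le] at hy
    linarith
  have hSbdd : BddBelow S := ⟨1, fun y hy => hSsub y hy⟩
  have hSclosed : IsClosed S := isClosed_le hρc continuous_const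
  set x₀ := sInf S with hx₀
  have hx₀S : x₀ ∈ S := hSclosed.csInf_mem hSne hSbdd
  have hx₀1 : 1 ≤ x₀ := le_csInf hSne hSsub
  have hx₀gt : 1 < x₀ := by
    rcases eq_or_lt_of_le hx₀1 with he | h
    · exfalso
      have := hx₀S
      rw [Set.mem_setOf_eq, ← he, hρ1 1 le_rfl] at this
      linarith
    · exact h
  have hpos : ∀ y : ℝ, y < x₀ → 0 < ρ y := by
    intro y hy
    by_contra hy'
    push_neg at hy'
    exact absurd (csInf_le hSbdd hy') (not_le.2 hy)
  have hid := rho_int_id hρc hρ1 hρdiff hρeq x₀ hx₀1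
  have hintpos : 0 < ∫ t in (x₀-1)..x₀, ρ t := by
    apply intervalIntegral.intervalIntegral_pos_of_pos_on (hρc.intervalIntegrable _ _)
    · intro t ht
      exact hpos t ht.2
    · linarith
  rw [← hid] at hintpos
  have : x₀ * ρ x₀ ≤ 0 := mul_nonpos_of_nonneg_of_nonpos (by linarith) hx₀S
  linarith

lemma rho_anti : ∀ x y : ℝ, x ≤ y → ρ y ≤ ρ x := by
  have hI : AntitoneOn ρ (Set.Ici 1) := by
    apply antitoneOn_of_deriv_nonpos (convex_Ici 1) hρc.continuousOn
    · intro x hx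
      rw [interior_Ici] at hx
      exact (hρdiff x hx).differentiableWithinAt
    · intro x hx
      rw [interior_Ici, Set.mem_Ioi] at hx
      have h1 := hρeq x hx
      have h2 := rho_nonneg hρc hρ1 hρdiff hρeq (x - 1)
      have hx0 : (0:ℝ) < x := by linarith
      nlinarith
  intro x y hxy
  rcases le_or_gt y 1 with hy | hy
  · rw [hρ1 x (le_trans hxy hy), hρ1 y hy]
  · rcases le_or_gt x 1 with hx | hx
    · rw [hρ1 x hx]
      calc ρ y ≤ ρ 1 := hI (by norm_num) hy.le hy.le
      _ = 1 := hρ1 1 le_rfl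
    · exact hI hx.le (le_trans hx.le hxy) hxy

lemma rho_le_one : ∀ x : ℝ, ρ x ≤ 1 := by
  intro x
  rcases le_or_gt x 1 with hx | hx
  · rw [hρ1 x hx]
  · calc ρ x ≤ ρ 1 := rho_anti hρc hρ1 hρdiff hρeq 1 x hx.le
    _ = 1 := hρ1 1 le_rfl

lemma rho_step : ∀ x : ℝ, 1 ≤ x → x * ρ x ≤ ρ (x-1) := by
  intro x hx
  rw [rho_int_id hρc hρ1 hρdiff hρeq x hx]
  calc (∫ t in (x-1)..x, ρ t) ≤ ∫ _t in (x-1)..x, ρ (x-1) := by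
        apply intervalIntegral.integral_mono_on (by linarith) (hρc.intervalIntegrable _ _)
          (intervalIntegrable_const)
        intro t ht
        exact rho_anti hρc hρ1 hρdiff hρeq (x-1) t ht.1
  _ = ρ (x-1) := by simp

lemma rho_decay : ∀ x : ℝ, 2 ≤ x → ρ x ≤ 2 / x^2 := by
  intro x hx
  have hx0 : (0:ℝ) < x := by linarith
  have h1 : x * ρ x ≤ ρ (x-1) := rho_step hρc hρ1 hρdiff hρeq x (by linarith)
  have h2 : (x-1) * ρ (x-1) ≤ ρ (x-2) := by
    have := rho_step hρc hρ1 hρdiff hρeq (x-1) (by linarith)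
    convert this using 2
    ring
  have h3 : ρ (x-2) ≤ 1 := rho_le_one hρc hρ1 hρdiff hρeq (x-2)
  have h4 : 0 ≤ ρ (x-1) := rho_nonneg hρc hρ1 hρdiff hρeq (x-1)
  have h5 : 0 ≤ ρ x := rho_nonneg hρc hρ1 hρdiff hρeq x
  rw [le_div_iff₀ (by positivity : (0:ℝ) < x^2)]
  nlinarith [mul_le_mul_of_nonneg_left h1 hx0.le, mul_le_mul_of_nonneg_left h2 hx0.le,
    mul_le_mul_of_nonneg_left h3 hx0.le]

lemma rho_integrable : IntegrableOn ρ (Set.Ioi (0:ℝ)) volume := by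
  have h1 : IntegrableOn ρ (Set.Ioc (0:ℝ) 2) volume :=
    (hρc.integrableOn_Icc).mono_set Set.Ioc_subset_Icc_self
  have h2 : IntegrableOn ρ (Set.Ioi (2:ℝ)) volume := by
    have hb : IntegrableOn (fun x : ℝ => 2 * x ^ (-2:ℝ)) (Set.Ioi (2:ℝ)) volume := by
      apply Integrable.const_mul
      exact integrableOn_Ioi_rpow_of_lt (by norm_num) (by norm_num)
    apply Integrable.mono' hb hρc.aestronglyMeasurable.restrict
    rw [ae_restrict_iff' measurableSet_Ioi]
    filter_upwards with x hx
    rw [Set.mem_Ioi] at hx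
    have hx0 : (0:ℝ) < x := by linarith
    rw [Real.norm_eq_abs, abs_of_nonneg (rho_nonneg hρc hρ1 hρdiff hρeq x)]
    have := rho_decay hρc hρ1 hρdiff hρeq x hx.le
    calc ρ x ≤ 2 / x^2 := this
    _ = 2 * x ^ (-2:ℝ) := by
        rw [Real.rpow_neg hx0.le, div_eq_mul_inv, ← Real.rpow_natCast x 2]
        norm_num
  have : Set.Ioi (0:ℝ) ⊆ Set.Ioc (0:ℝ) 2 ∪ Set.Ioi 2 := by
    intro y hy
    rcases le_or_gt y 2 with h | h
    · exact Or.inl ⟨hy, h⟩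
    · exact Or.inr h
  exact (h1.union h2).mono_set this
end rho


lemma exp_hda (s w : ℝ) : HasDerivAt (fun w : ℝ => -Real.exp (-(s*w))) (s * Real.exp (-(s*w))) w := by
  have hinner : HasDerivAt (fun w : ℝ => -(s*w)) (-s) w := by
    simpa using ((hasDerivAt_id w).const_mul s).fun_neg
  have := ((Real.hasDerivAt_exp (-(s*w))).comp w hinner).fun_neg
  refine this.congr_deriv ?_
  ring

lemma exp_int (s a b : ℝ) :
    ∫ w in a..b, s * Real.exp (-(s*w)) = Real.exp (-(s*a)) - Real.exp (-(s*b)) := by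
  rw [integral_eq_sub_of_hasDerivAt (fun w _ => exp_hda s w)
    (Continuous.intervalIntegrable (by continuity) a b)]
  ring

lemma exp_int_set (s a b : ℝ) (hab : a ≤ b) :
    ∫ w in Set.Ioc a b, s * Real.exp (-(s*w)) = Real.exp (-(s*a)) - Real.exp (-(s*b)) := by
  rw [← intervalIntegral.integral_of_le hab, exp_int]

lemma exp_int2 (s a b : ℝ) (hs : s ≠ 0) :
    ∫ u in a..b, s * u * Real.exp (-(s*u)) =
      (-(b * Real.exp (-(s*b))) - Real.exp (-(s*b))/s) -
      (-(a * Real.exp (-(s*a))) - Real.exp (-(s*a))/s) := by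
  have h : ∀ u ∈ Set.uIcc a b, HasDerivAt
      (fun u : ℝ => -(u * Real.exp (-(s*u))) - Real.exp (-(s*u))/s)
      (s * u * Real.exp (-(s*u))) u := by
    intro u _
    have h1 : HasDerivAt (fun u : ℝ => u * Real.exp (-(s*u)))
        (Real.exp (-(s*u)) + u * (-s * Real.exp (-(s*u)))) u := by
      have he : HasDerivAt (fun u : ℝ => Real.exp (-(s*u))) (-s * Real.exp (-(s*u))) u := by
        have := (exp_hda s u).fun_neg
        simp only [neg_neg] at this
        refine this.congr_deriv ?_
        ring
      simpa using (hasDerivAt_id u).fun_mul he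
    have h2 : HasDerivAt (fun u : ℝ => Real.exp (-(s*u))/s) (-Real.exp (-(s*u))) u := by
      have := (exp_hda s u).fun_neg
      simp only [neg_neg] at this
      have h3 := this.div_const s
      refine h3.congr_deriv ?_
      field_simp
    have := h1.fun_neg.fun_sub h2
    refine this.congr_deriv ?_
    ring
  rw [integral_eq_sub_of_hasDerivAt h (Continuous.intervalIntegrable (by continuity) a b)]

lemma ein_meas : Measurable (fun t : ℝ => (1 - Real.exp (-t))/t) := by
  apply Measurable.div <;> fun_prop

lemma ein_bound {t : ℝ} (ht : 0 < t) : 0 ≤ (1 - Real.exp (-t))/t ∧ (1 - Real.exp (-t))/t ≤ 1 := by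
  have h1 : Real.exp (-t) ≤ 1 := by rw [Real.exp_le_one_iff]; linarith
  have h2 : 1 - t ≤ Real.exp (-t) := by nlinarith [Real.add_one_le_exp (-t)]
  constructor
  · apply div_nonneg (by linarith) ht.le
  · rw [div_le_one ht]; linarith

lemma ein_intInt (s : ℝ) (hs : 0 ≤ s) :
    IntervalIntegrable (fun t : ℝ => (1 - Real.exp (-t))/t) volume 0 s := by
  rw [intervalIntegrable_iff, Set.uIoc_of_le hs]
  apply Integrable.mono' (integrableOn_const (C := (1:ℝ)) (by simp))
    ein_meas.aestronglyMeasurable.restrict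
  rw [ae_restrict_iff' measurableSet_Ioc]
  filter_upwards with t ht
  rw [Real.norm_eq_abs, abs_of_nonneg (ein_bound ht.1).1]
  exact (ein_bound ht.1).2

lemma ein_hasDeriv (s : ℝ) (hs : 0 < s) :
    HasDerivAt (fun x => ∫ t in (0:ℝ)..x, (1 - Real.exp (-t))/t) ((1 - Real.exp (-s))/s) s := by
  apply intervalIntegral.integral_hasDerivAt_right (ein_intInt s hs.le)
    ein_meas.stronglyMeasurable.stronglyMeasurableAtFilter
  exact ContinuousAt.div (by fun_prop) continuousAt_id hs.ne'

lemma expdiv_integrable : IntegrableOn (fun t : ℝ => Real.exp (-t)/t) (Set.Ioi (1:ℝ)) volume := by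
  have hb : IntegrableOn (fun t : ℝ => Real.exp (-t)) (Set.Ioi (1:ℝ)) volume := by
    have := exp_neg_integrableOn_Ioi (1:ℝ) zero_lt_one
    simpa only [neg_mul, one_mul] using this
  apply Integrable.mono' hb ((by fun_prop : Measurable fun t : ℝ =>
    Real.exp (-t)/t)).aestronglyMeasurable.restrict
  rw [ae_restrict_iff' measurableSet_Ioi]
  filter_upwards with t ht
  rw [Set.mem_Ioi] at ht
  rw [Real.norm_eq_abs, abs_of_nonneg (div_nonneg (Real.exp_nonneg _) (by linarith))]
  exact div_le_self (Real.exp_nonneg _) ht.le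


section rho
variable {ρ : ℝ → ℝ} (hρc : Continuous ρ) (hρ1 : ∀ x : ℝ, x ≤ 1 → ρ x = 1)
  (hρdiff : ∀ x : ℝ, 1 < x → DifferentiableAt ℝ ρ x)
  (hρeq : ∀ x : ℝ, 1 < x → x * deriv ρ x = -ρ (x - 1))


include hρc hρ1 hρdiff hρeq

lemma lap_integrable : ∀ s : ℝ, 0 ≤ s →
    IntegrableOn (fun u => Real.exp (-(s*u)) * ρ u) (Set.Ioi (0:ℝ)) volume := by
  intro s hs
  apply Integrable.mono' ((rho_integrable hρc hρ1 hρdiff hρeq))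
    ((by continuity : Continuous fun u => Real.exp (-(s*u)) * ρ u).aestronglyMeasurable.restrict)
  rw [ae_restrict_iff' measurableSet_Ioi]
  filter_upwards with u hu
  rw [Set.mem_Ioi] at hu
  rw [Real.norm_eq_abs, abs_mul, abs_of_nonneg (Real.exp_nonneg _),
    abs_of_nonneg (rho_nonneg hρc hρ1 hρdiff hρeq u)]
  calc Real.exp (-(s*u)) * ρ u ≤ 1 * ρ u := by
        apply mul_le_mul_of_nonneg_right _ (rho_nonneg hρc hρ1 hρdiff hρeq u)
        rw [Real.exp_le_one_iff]
        nlinarith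
  _ = ρ u := one_mul _

omit hρc hρ1 hρdiff hρeq in
lemma lap_split (s : ℝ) (f : ℝ → ℝ) (hf : IntegrableOn f (Set.Ioi (0:ℝ)) volume) :
    ∫ u in Set.Ioi (0:ℝ), f u = (∫ u in Set.Ioc (0:ℝ) 1, f u) + ∫ u in Set.Ioi (1:ℝ), f u := by
  have hU : Set.Ioi (0:ℝ) = Set.Ioc (0:ℝ) 1 ∪ Set.Ioi 1 := (Set.Ioc_union_Ioi_eq_Ioi zero_le_one).symm
  rw [hU, setIntegral_union (Set.Ioc_disjoint_Ioi le_rfl) measurableSet_Ioi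
    (hf.mono_set (by rw [hU]; exact Set.subset_union_left))
    (hf.mono_set (by rw [hU]; exact Set.subset_union_right))]

lemma lap_pos : ∀ s : ℝ, 0 ≤ s → 0 < ∫ u in Set.Ioi (0:ℝ), Real.exp (-(s*u)) * ρ u := by
  intro s hs
  rw [lap_split s _ (lap_integrable hρc hρ1 hρdiff hρeq s hs)]
  have h2 : 0 ≤ ∫ u in Set.Ioi (1:ℝ), Real.exp (-(s*u)) * ρ u := by
    apply setIntegral_nonneg measurableSet_Ioi
    intro u _
    exact mul_nonneg (Real.exp_nonneg _) (rho_nonneg hρc hρ1 hρdiff hρeq u)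
  have h1 : Real.exp (-s) ≤ ∫ u in Set.Ioc (0:ℝ) 1, Real.exp (-(s*u)) * ρ u := by
    have : ∫ u in Set.Ioc (0:ℝ) 1, Real.exp (-s) = Real.exp (-s) := by
      simp [Real.volume_Ioc]
    rw [← this]
    apply setIntegral_mono_on (integrableOn_const (by simp))
      ((lap_integrable hρc hρ1 hρdiff hρeq s hs).mono_set
        (fun y hy => Set.mem_Ioi.2 hy.1)) measurableSet_Ioc
    intro u hu
    rw [hρ1 u hu.2, mul_one, Real.exp_le_exp]
    nlinarith [hu.1, hu.2]
  nlinarith [Real.exp_pos (-s)]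

lemma lap_hasDeriv : ∀ s : ℝ, 0 < s →
    Integrable (fun u => -u * Real.exp (-(s*u)) * ρ u) (volume.restrict (Set.Ioi (0:ℝ))) ∧
    HasDerivAt (fun x => ∫ u in Set.Ioi (0:ℝ), Real.exp (-(x*u)) * ρ u)
      (∫ u in Set.Ioi (0:ℝ), -u * Real.exp (-(s*u)) * ρ u) s := by
  intro s hs
  have hbint : Integrable (fun a : ℝ => (4/s) * Real.exp (-(s/4*a))) (volume.restrict (Set.Ioi (0:ℝ))) := by
    have := (exp_neg_integrableOn_Ioi (0:ℝ) (show (0:ℝ) < s/4 by linarith)).const_mul (4/s)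
    simpa [neg_mul] using this
  have key := _root_.hasDerivAt_integral_of_dominated_loc_of_deriv_le
    (F := fun (x : ℝ) (a : ℝ) => Real.exp (-(x*a)) * ρ a)
    (F' := fun (x : ℝ) (a : ℝ) => -a * Real.exp (-(x*a)) * ρ a)
    (x₀ := s) (s := Metric.ball s (s/2))
    (bound := fun a => (4/s) * Real.exp (-(s/4*a)))
    (μ := volume.restrict (Set.Ioi (0:ℝ)))
    (Metric.ball_mem_nhds s (by linarith))
    (by
      filter_upwards with x
      exact (by continuity : Continuous fun u => Real.exp (-(x*u)) * ρ u).aestronglyMeasurable.restrict)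
    (lap_integrable hρc hρ1 hρdiff hρeq s hs.le)
    ((by continuity : Continuous fun u => -u * Real.exp (-(s*u)) * ρ u).aestronglyMeasurable.restrict)
    (by
      rw [ae_restrict_iff' measurableSet_Ioi]
      filter_upwards with a ha
      intro x hx
      rw [Set.mem_Ioi] at ha
      rw [Metric.mem_ball, Real.dist_eq, abs_lt] at hx
      have hx2 : s/2 < x := by linarith
      rw [Real.norm_eq_abs, abs_mul, abs_mul, abs_neg, abs_of_nonneg ha.le,
        abs_of_nonneg (Real.exp_nonneg _), abs_of_nonneg (rho_nonneg hρc hρ1 hρdiff hρeq a)]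
      have h1 : ρ a ≤ 1 := rho_le_one hρc hρ1 hρdiff hρeq a
      have h2 : Real.exp (-(x*a)) ≤ Real.exp (-(s/2*a)) := by
        rw [Real.exp_le_exp]
        nlinarith
      have h3 : a * Real.exp (-(s/2*a)) ≤ (4/s) * Real.exp (-(s/4*a)) := by
        have hexp : s/4*a ≤ Real.exp (s/4*a) := by
          nlinarith [Real.add_one_le_exp (s/4*a), Real.exp_nonneg (s/4*a)]
        have : a ≤ (4/s) * Real.exp (s/4*a) := by
          have h4 : (0:ℝ) < 4/s := by positivity
          have h5 : (4/s) * (s/4*a) ≤ (4/s) * Real.exp (s/4*a) :=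
            mul_le_mul_of_nonneg_left hexp h4.le
          have h6 : (4/s) * (s/4*a) = a := by field_simp
          linarith
        calc a * Real.exp (-(s/2*a)) ≤ ((4/s) * Real.exp (s/4*a)) * Real.exp (-(s/2*a)) := by
              apply mul_le_mul_of_nonneg_right this (Real.exp_nonneg _)
        _ = (4/s) * Real.exp (s/4*a + -(s/2*a)) := by rw [mul_assoc, ← Real.exp_add]
        _ ≤ (4/s) * Real.exp (-(s/4*a)) := by
              apply mul_le_mul_of_nonneg_left _ (by positivity)
              rw [Real.exp_le_exp]
              ring_nf
              nlinarith
      calc a * Real.exp (-(x*a)) * ρ a ≤ a * Real.exp (-(x*a)) * 1 := by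
            apply mul_le_mul_of_nonneg_left h1 (by positivity)
      _ = a * Real.exp (-(x*a)) := mul_one _
      _ ≤ a * Real.exp (-(s/2*a)) := mul_le_mul_of_nonneg_left h2 ha.le
      _ ≤ (4/s) * Real.exp (-(s/4*a)) := h3)
    hbint
    (by
      filter_upwards with a
      intro x _
      have hinner : HasDerivAt (fun x : ℝ => -(x*a)) (-a) x := by
        simpa using ((hasDerivAt_id x).mul_const a).fun_neg
      have := (Real.hasDerivAt_exp (-(x*a))).comp x hinner
      have h2 := this.mul_const (ρ a)
      refine h2.congr_deriv ?_
      ring)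
  exact key

lemma lap_ode : ∀ s : ℝ, 0 < s →
    ∫ u in Set.Ioi (0:ℝ), s * u * Real.exp (-(s*u)) * ρ u
      = (1 - Real.exp (-s)) * ∫ u in Set.Ioi (0:ℝ), Real.exp (-(s*u)) * ρ u := by
  intro s hs
  set F : ℝ := ∫ u in Set.Ioi (0:ℝ), Real.exp (-(s*u)) * ρ u with hF
  -- integrability of the weighted integrand
  have hwint : IntegrableOn (fun u => s * u * Real.exp (-(s*u)) * ρ u) (Set.Ioi (0:ℝ)) volume := by
    have h1 := (lap_hasDeriv hρc hρ1 hρdiff hρeq s hs).1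
    have h2 := (h1.neg).const_mul s
    apply h2.congr
    filter_upwards with u
    simp only [Pi.neg_apply]
    ring
  -- Part 1 : integral over (0,1]
  have hT1 : ∫ u in Set.Ioc (0:ℝ) 1, s * u * Real.exp (-(s*u)) * ρ u
      = (1 - Real.exp (-s))/s - Real.exp (-s) := by
    have hcong : ∫ u in Set.Ioc (0:ℝ) 1, s * u * Real.exp (-(s*u)) * ρ u
        = ∫ u in Set.Ioc (0:ℝ) 1, s * u * Real.exp (-(s*u)) := by
      apply setIntegral_congr_fun measurableSet_Ioc
      intro u hu
      show s * u * Real.exp (-(s*u)) * ρ u = s * u * Real.exp (-(s*u))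
      rw [hρ1 u hu.2, mul_one]
    rw [hcong, ← intervalIntegral.integral_of_le zero_le_one, exp_int2 s 0 1 hs.ne']
    field_simp
    simp only [mul_zero, neg_zero, Real.exp_zero]
    ring
  -- pointwise representation on (1,∞)
  have hrep : ∀ u : ℝ, u ∈ Set.Ioi (1:ℝ) →
      s * u * Real.exp (-(s*u)) * ρ u
        = ∫ v in Set.Ioc (0:ℝ) 1, s * Real.exp (-(s*u)) * ρ (u - v) := by
    intro u hu
    rw [Set.mem_Ioi] at hu
    have hid : u * ρ u = ∫ v in (0:ℝ)..1, ρ (u - v) := by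
      rw [rho_int_id hρc hρ1 hρdiff hρeq u hu.le]
      have := intervalIntegral.integral_comp_sub_left (a := (0:ℝ)) (b := 1) ρ u
      rw [this]
      norm_num
    have : ∫ v in Set.Ioc (0:ℝ) 1, s * Real.exp (-(s*u)) * ρ (u - v)
        = (s * Real.exp (-(s*u))) * ∫ v in Set.Ioc (0:ℝ) 1, ρ (u - v) := by
      rw [← MeasureTheory.integral_const_mul]
    rw [this, ← intervalIntegral.integral_of_le zero_le_one, ← hid]
    ring
  -- Fubini
  have hswap : ∫ u in Set.Ioi (1:ℝ), ∫ v in Set.Ioc (0:ℝ) 1, s * Real.exp (-(s*u)) * ρ (u - v)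
      = ∫ v in Set.Ioc (0:ℝ) 1, ∫ u in Set.Ioi (1:ℝ), s * Real.exp (-(s*u)) * ρ (u - v) := by
    apply MeasureTheory.integral_integral_swap
    have hbnd : Integrable (fun z : ℝ × ℝ => (s * Real.exp (-(s*z.1))) * 1)
        ((volume.restrict (Set.Ioi (1:ℝ))).prod (volume.restrict (Set.Ioc (0:ℝ) 1))) := by
      apply Integrable.mul_prod (f := fun u : ℝ => s * Real.exp (-(s*u))) (g := fun _ : ℝ => (1:ℝ))
      · have := (exp_neg_integrableOn_Ioi (1:ℝ) hs).const_mul s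
        apply this.congr
        filter_upwards with u
        rw [neg_mul]
      · exact integrableOn_const (by simp)
    apply hbnd.mono'
    · apply Continuous.aestronglyMeasurable
      exact (continuous_const.mul (Real.continuous_exp.comp
        ((continuous_const.mul continuous_fst).neg))).mul
        (hρc.comp (continuous_fst.sub continuous_snd))
    · filter_upwards with z
      rw [Function.uncurry]
      simp only [norm_mul, Real.norm_eq_abs, mul_one]
      rw [abs_of_nonneg hs.le, abs_of_nonneg (Real.exp_nonneg _),
        abs_of_nonneg (rho_nonneg hρc hρ1 hρdiff hρeq _)]
      rw [mul_assoc]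
      apply mul_le_mul_of_nonneg_left _ hs.le
      exact (mul_le_mul_of_nonneg_left (rho_le_one hρc hρ1 hρdiff hρeq _)
        (Real.exp_nonneg _)).trans_eq (mul_one _)
  -- inner integral evaluation
  have hinner : ∀ v : ℝ, v ∈ Set.Ioc (0:ℝ) 1 →
      ∫ u in Set.Ioi (1:ℝ), s * Real.exp (-(s*u)) * ρ (u - v)
        = Real.exp (-(s*v)) * (s * F - (1 - Real.exp (-(s*(1-v))))) := by
    intro v hv
    -- translation
    set f : ℝ → ℝ := fun w => s * Real.exp (-(s*(w+v))) * ρ w with hf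
    have htrans : ∫ u in Set.Ioi (1:ℝ), s * Real.exp (-(s*u)) * ρ (u - v)
        = ∫ w in Set.Ioi (1-v), f w := by
      have e1 : ∀ u : ℝ, (Set.Ioi (1:ℝ)).indicator (fun u => s * Real.exp (-(s*u)) * ρ (u - v)) u
          = (Set.Ioi (1-v)).indicator f (u - v) := by
        intro u
        by_cases hu : u ∈ Set.Ioi (1:ℝ)
        · rw [Set.indicator_of_mem hu, Set.indicator_of_mem
            (by rw [Set.mem_Ioi] at hu ⊢; linarith)]
          rw [hf]
          simp only
          rw [sub_add_cancel]
        · rw [Set.indicator_of_notMem hu, Set.indicator_of_notMem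
            (by rw [Set.mem_Ioi] at hu ⊢; intro h; exact hu (by linarith))]
      rw [← MeasureTheory.integral_indicator measurableSet_Ioi, ← MeasureTheory.integral_indicator measurableSet_Ioi]
      calc ∫ u, (Set.Ioi (1:ℝ)).indicator (fun u => s * Real.exp (-(s*u)) * ρ (u - v)) u
          = ∫ u, (Set.Ioi (1-v)).indicator f (u - v) := by
            apply MeasureTheory.integral_congr_ae
            filter_upwards with u
            exact e1 u
      _ = ∫ w, (Set.Ioi (1-v)).indicator f w := integral_sub_right_eq_self _ v
    rw [htrans]
    -- pull out exp(-(s*v))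
    have hpull : ∫ w in Set.Ioi (1-v), f w
        = Real.exp (-(s*v)) * ∫ w in Set.Ioi (1-v), s * Real.exp (-(s*w)) * ρ w := by
      rw [← MeasureTheory.integral_const_mul]
      apply setIntegral_congr_fun measurableSet_Ioi
      intro w _
      rw [hf]
      simp only
      rw [show -(s*(w+v)) = -(s*v) + -(s*w) by ring, Real.exp_add]
      ring
    rw [hpull]
    congr 1
    -- evaluate the remaining integral
    have hsF : s * F = ∫ w in Set.Ioi (0:ℝ), s * Real.exp (-(s*w)) * ρ w := by
      rw [hF, ← MeasureTheory.integral_const_mul]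
      congr 1
      ext w
      ring
    have hvsub : (0:ℝ) ≤ 1 - v := by linarith [hv.2]
    have hint0 : IntegrableOn (fun w => s * Real.exp (-(s*w)) * ρ w) (Set.Ioi (0:ℝ)) volume := by
      have := (lap_integrable hρc hρ1 hρdiff hρeq s hs.le).const_mul s
      apply this.congr
      filter_upwards with w
      ring
    have hsplit2 : Set.Ioi (0:ℝ) = Set.Ioc (0:ℝ) (1-v) ∪ Set.Ioi (1-v) := by
      rcases eq_or_lt_of_le hvsub with he | hlt
      · rw [← he]
        simp
      · exact (Set.Ioc_union_Ioi_eq_Ioi hvsub).symm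
    have := setIntegral_union (f := fun w => s * Real.exp (-(s*w)) * ρ w)
      (Set.Ioc_disjoint_Ioi le_rfl) measurableSet_Ioi
      (hint0.mono_set (by rw [hsplit2]; exact Set.subset_union_left))
      (hint0.mono_set (by rw [hsplit2]; exact Set.subset_union_right))
    rw [← hsplit2] at this
    have hlow : ∫ w in Set.Ioc (0:ℝ) (1-v), s * Real.exp (-(s*w)) * ρ w
        = 1 - Real.exp (-(s*(1-v))) := by
      have hcong2 : ∫ w in Set.Ioc (0:ℝ) (1-v), s * Real.exp (-(s*w)) * ρ w
          = ∫ w in Set.Ioc (0:ℝ) (1-v), s * Real.exp (-(s*w)) := by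
        apply setIntegral_congr_fun measurableSet_Ioc
        intro w hw
        show s * Real.exp (-(s*w)) * ρ w = s * Real.exp (-(s*w))
        rw [hρ1 w (by linarith [hw.2, hv.1]), mul_one]
      rw [hcong2, exp_int_set s 0 (1-v) hvsub]
      norm_num
    rw [← hsF] at this
    rw [← hlow]
    linarith [this]
  -- outer integral evaluation
  have houter : ∫ v in Set.Ioc (0:ℝ) 1, Real.exp (-(s*v)) * (s * F - (1 - Real.exp (-(s*(1-v)))))
      = (s * F - 1) * ((1 - Real.exp (-s))/s) + Real.exp (-s) := by
    have hs0 : s ≠ 0 := hs.ne'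
    have hexpand : ∀ v : ℝ, Real.exp (-(s*v)) * (s * F - (1 - Real.exp (-(s*(1-v)))))
        = (s*F - 1) * (s⁻¹ * (s * Real.exp (-(s*v)))) + Real.exp (-s) := by
      intro v
      have h1 : s⁻¹ * (s * Real.exp (-(s*v))) = Real.exp (-(s*v)) := by
        field_simp
      have h2 : Real.exp (-(s*v)) * Real.exp (-(s*(1-v))) = Real.exp (-s) := by
        rw [← Real.exp_add]
        congr 1
        ring
      rw [h1]
      linear_combination h2
    calc ∫ v in Set.Ioc (0:ℝ) 1, Real.exp (-(s*v)) * (s * F - (1 - Real.exp (-(s*(1-v)))))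
        = ∫ v in Set.Ioc (0:ℝ) 1, ((s*F - 1) * (s⁻¹ * (s * Real.exp (-(s*v)))) + Real.exp (-s)) := by
          apply setIntegral_congr_fun measurableSet_Ioc
          intro v _
          exact hexpand v
    _ = (s*F-1) * (s⁻¹ * ∫ v in Set.Ioc (0:ℝ) 1, s * Real.exp (-(s*v)))
          + Real.exp (-s) := by
          rw [MeasureTheory.integral_add]
          · rw [MeasureTheory.integral_const_mul, MeasureTheory.integral_const_mul]
            simp [Real.volume_Ioc]
          · exact ((by continuity : Continuous fun v : ℝ =>
              (s*F-1) * (s⁻¹ * (s * Real.exp (-(s*v))))).integrableOn_Ioc)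
          · exact integrableOn_const (by simp)
    _ = (s*F - 1) * ((1 - Real.exp (-s))/s) + Real.exp (-s) := by
          rw [exp_int_set s 0 1 zero_le_one]
          simp only [mul_zero, neg_zero, Real.exp_zero, mul_one]
          ring
  -- assemble
  rw [lap_split s _ hwint, hT1]
  have hstep1 : ∫ u in Set.Ioi (1:ℝ), s * u * Real.exp (-(s*u)) * ρ u
      = ∫ u in Set.Ioi (1:ℝ), ∫ v in Set.Ioc (0:ℝ) 1, s * Real.exp (-(s*u)) * ρ (u - v) :=
    setIntegral_congr_fun measurableSet_Ioi hrep
  have hstep2 : ∫ v in Set.Ioc (0:ℝ) 1, ∫ u in Set.Ioi (1:ℝ), s * Real.exp (-(s*u)) * ρ (u - v)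
      = ∫ v in Set.Ioc (0:ℝ) 1, Real.exp (-(s*v)) * (s * F - (1 - Real.exp (-(s*(1-v))))) :=
    setIntegral_congr_fun measurableSet_Ioc hinner
  rw [hstep1, hswap, hstep2, houter]
  have hs0 : s ≠ 0 := hs.ne'
  have hFe : (1 - Real.exp (-s)) * F = (1 - Real.exp (-s))/s - Real.exp (-s)
      + ((s*F - 1) * ((1 - Real.exp (-s))/s) + Real.exp (-s)) := by
    field_simp
    ring
  exact hFe.symm

lemma lap_H_hasDeriv : ∀ s : ℝ, 0 < s →
    HasDerivAt (fun x => Real.log (∫ u in Set.Ioi (0:ℝ), Real.exp (-(x*u)) * ρ u)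
      + ∫ t in (0:ℝ)..x, (1 - Real.exp (-t))/t) 0 s := by
  intro s hs
  set F : ℝ := ∫ u in Set.Ioi (0:ℝ), Real.exp (-(s*u)) * ρ u with hF
  set D : ℝ := ∫ u in Set.Ioi (0:ℝ), -u * Real.exp (-(s*u)) * ρ u with hD
  have hFpos : 0 < F := lap_pos hρc hρ1 hρdiff hρeq s hs.le
  have hDeq : s * (-D) = (1 - Real.exp (-s)) * F := by
    rw [hD, ← MeasureTheory.integral_neg, ← MeasureTheory.integral_const_mul,
      ← lap_ode hρc hρ1 hρdiff hρeq s hs]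
    congr 1
    ext u
    ring
  have hlog : HasDerivAt (fun x => Real.log (∫ u in Set.Ioi (0:ℝ), Real.exp (-(x*u)) * ρ u))
      (D / F) s := ((lap_hasDeriv hρc hρ1 hρdiff hρeq s hs).2).log hFpos.ne'
  have hsum := hlog.add (ein_hasDeriv s hs)
  have : D / F + (1 - Real.exp (-s))/s = 0 := by
    have hs0 : s ≠ 0 := hs.ne'
    field_simp
    nlinarith [hDeq]
  rw [this] at hsum
  exact hsum

lemma lap_H_const : ∀ a b : ℝ, 0 < a → a ≤ b →
    Real.log (∫ u in Set.Ioi (0:ℝ), Real.exp (-(a*u)) * ρ u)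
      + (∫ t in (0:ℝ)..a, (1 - Real.exp (-t))/t)
    = Real.log (∫ u in Set.Ioi (0:ℝ), Real.exp (-(b*u)) * ρ u)
      + ∫ t in (0:ℝ)..b, (1 - Real.exp (-t))/t := by
  intro a b ha hab
  set H : ℝ → ℝ := fun x => Real.log (∫ u in Set.Ioi (0:ℝ), Real.exp (-(x*u)) * ρ u)
      + ∫ t in (0:ℝ)..x, (1 - Real.exp (-t))/t with hH
  have key := eq_of_has_deriv_right_eq (f := H) (g := fun _ => H a) (f' := fun _ => 0)
    (a := a) (b := b)
    (fun y hy => (lap_H_hasDeriv hρc hρ1 hρdiff hρeq y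
      (lt_of_lt_of_le ha hy.1)).hasDerivWithinAt)
    (fun y _ => (hasDerivAt_const y (H a)).hasDerivWithinAt)
    (fun y hy => (lap_H_hasDeriv hρc hρ1 hρdiff hρeq y
      (lt_of_lt_of_le ha hy.1)).continuousAt.continuousWithinAt)
    continuousOn_const rfl
  exact (key b ⟨hab, le_refl b⟩).symm

lemma lap_lim_zero :
    Tendsto (fun s : ℝ => ∫ u in Set.Ioi (0:ℝ), Real.exp (-(s*u)) * ρ u)
      (𝓝[>] (0:ℝ)) (𝓝 (∫ u in Set.Ioi (0:ℝ), ρ u)) := by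
  apply MeasureTheory.tendsto_integral_filter_of_dominated_convergence (bound := ρ)
  · filter_upwards with x
    exact (by continuity : Continuous fun u => Real.exp (-(x*u)) * ρ u).aestronglyMeasurable.restrict
  · filter_upwards [self_mem_nhdsWithin] with x hx
    rw [Set.mem_Ioi] at hx
    rw [ae_restrict_iff' measurableSet_Ioi]
    filter_upwards with u hu
    rw [Set.mem_Ioi] at hu
    rw [Real.norm_eq_abs, abs_mul, abs_of_nonneg (Real.exp_nonneg _),
      abs_of_nonneg (rho_nonneg hρc hρ1 hρdiff hρeq u)]
    calc Real.exp (-(x*u)) * ρ u ≤ 1 * ρ u := by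
          apply mul_le_mul_of_nonneg_right _ (rho_nonneg hρc hρ1 hρdiff hρeq u)
          rw [Real.exp_le_one_iff]
          nlinarith
    _ = ρ u := one_mul _
  · exact (rho_integrable hρc hρ1 hρdiff hρeq)
  · rw [ae_restrict_iff' measurableSet_Ioi]
    filter_upwards with u hu
    have hc : Tendsto (fun s : ℝ => Real.exp (-(s*u)) * ρ u) (𝓝 0) (𝓝 (ρ u)) := by
      have : Continuous fun s : ℝ => Real.exp (-(s*u)) * ρ u := by continuity
      have h2 := this.tendsto 0
      simpa using h2
    exact hc.mono_left nhdsWithin_le_nhds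

lemma ein_lim_zero :
    Tendsto (fun s : ℝ => ∫ t in (0:ℝ)..s, (1 - Real.exp (-t))/t) (𝓝[>] (0:ℝ)) (𝓝 0) := by
  apply squeeze_zero_norm' (a := fun s => |s|)
  · filter_upwards [self_mem_nhdsWithin] with s hs
    rw [Set.mem_Ioi] at hs
    have := intervalIntegral.norm_integral_le_of_norm_le_const
      (C := 1) (f := fun t : ℝ => (1 - Real.exp (-t))/t) (a := 0) (b := s) ?_
    · simpa using this
    · intro t ht
      rw [Set.uIoc_of_le hs.le] at ht
      rw [Real.norm_eq_abs, abs_of_nonneg (ein_bound ht.1).1]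
      exact (ein_bound ht.1).2
  · have : Tendsto (fun s : ℝ => |s|) (𝓝 0) (𝓝 0) := by
      have := continuous_abs.tendsto (0:ℝ)
      simpa using this
    exact this.mono_left nhdsWithin_le_nhds

lemma lap_lim_sF :
    Tendsto (fun s : ℝ => s * ∫ u in Set.Ioi (0:ℝ), Real.exp (-(s*u)) * ρ u)
      atTop (𝓝 1) := by
  have hexpint : ∀ s : ℝ, 0 < s →
      IntegrableOn (fun u : ℝ => s * Real.exp (-(s*u))) (Set.Ioi (1:ℝ)) volume := by
    intro s hs
    have h2 := (exp_neg_integrableOn_Ioi (1:ℝ) hs).const_mul s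
    apply h2.congr
    filter_upwards with u
    rw [neg_mul]
  have hioi : ∀ s : ℝ, 0 < s →
      ∫ u in Set.Ioi (1:ℝ), s * Real.exp (-(s*u)) = Real.exp (-s) := by
    intro s hs
    have htend : Tendsto (fun w : ℝ => -Real.exp (-(s*w))) atTop (𝓝 0) := by
      have h1 : Tendsto (fun w : ℝ => s * w) atTop atTop :=
        Tendsto.const_mul_atTop hs tendsto_id
      have h2 : Tendsto (fun w : ℝ => -(s * w)) atTop atBot :=
        tendsto_neg_atTop_atBot.comp h1
      have h3 := Real.tendsto_exp_atBot.comp h2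
      have h4 := h3.neg
      simpa using h4
    have := integral_Ioi_of_hasDerivAt_of_tendsto
      (f := fun w : ℝ => -Real.exp (-(s*w))) (f' := fun w => s * Real.exp (-(s*w)))
      (a := 1) (m := 0)
      (by apply Continuous.continuousWithinAt; continuity)
      (fun x _ => exp_hda s x)
      (hexpint s hs) htend
    rw [this]
    norm_num
  have hbnds : ∀ s : ℝ, 0 < s →
      (1 - Real.exp (-s)) ≤ s * (∫ u in Set.Ioi (0:ℝ), Real.exp (-(s*u)) * ρ u) ∧
      s * (∫ u in Set.Ioi (0:ℝ), Real.exp (-(s*u)) * ρ u) ≤ (1 - Real.exp (-s)) + Real.exp (-s) := by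
    intro s hs
    have hint : IntegrableOn (fun u => s * Real.exp (-(s*u)) * ρ u) (Set.Ioi (0:ℝ)) volume := by
      have := (lap_integrable hρc hρ1 hρdiff hρeq s hs.le).const_mul s
      apply this.congr
      filter_upwards with u
      ring
    have hmul : s * ∫ u in Set.Ioi (0:ℝ), Real.exp (-(s*u)) * ρ u
        = ∫ u in Set.Ioi (0:ℝ), s * Real.exp (-(s*u)) * ρ u := by
      rw [← MeasureTheory.integral_const_mul]
      congr 1
      ext u
      ring
    have hsplitv := lap_split s _ hint
    have hlow : ∫ u in Set.Ioc (0:ℝ) 1, s * Real.exp (-(s*u)) * ρ u = 1 - Real.exp (-s) := by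
      have hcong : ∫ u in Set.Ioc (0:ℝ) 1, s * Real.exp (-(s*u)) * ρ u
          = ∫ u in Set.Ioc (0:ℝ) 1, s * Real.exp (-(s*u)) := by
        apply setIntegral_congr_fun measurableSet_Ioc
        intro u hu
        show s * Real.exp (-(s*u)) * ρ u = s * Real.exp (-(s*u))
        rw [hρ1 u hu.2, mul_one]
      rw [hcong, exp_int_set s 0 1 zero_le_one]
      norm_num
    have hR0 : 0 ≤ ∫ u in Set.Ioi (1:ℝ), s * Real.exp (-(s*u)) * ρ u := by
      apply setIntegral_nonneg measurableSet_Ioi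
      intro u _
      have := rho_nonneg hρc hρ1 hρdiff hρeq u
      positivity
    have hRle : ∫ u in Set.Ioi (1:ℝ), s * Real.exp (-(s*u)) * ρ u ≤ Real.exp (-s) := by
      rw [← hioi s hs]
      apply setIntegral_mono_on
        (hint.mono_set (fun y hy => Set.mem_Ioi.2 (by rw [Set.mem_Ioi] at hy; linarith)))
        (hexpint s hs) measurableSet_Ioi
      intro u _
      calc s * Real.exp (-(s*u)) * ρ u ≤ s * Real.exp (-(s*u)) * 1 := by
            apply mul_le_mul_of_nonneg_left (rho_le_one hρc hρ1 hρdiff hρeq u) (by positivity)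
      _ = s * Real.exp (-(s*u)) := mul_one _
    constructor
    · rw [hmul, hsplitv, hlow]
      linarith
    · rw [hmul, hsplitv, hlow]
      linarith
  have hlo : Tendsto (fun s : ℝ => 1 - Real.exp (-s)) atTop (𝓝 1) := by
    have h1 : Tendsto (fun s : ℝ => Real.exp (-s)) atTop (𝓝 0) :=
      Real.tendsto_exp_atBot.comp tendsto_neg_atTop_atBot
    have := h1.const_sub 1
    simpa using this
  have hhi : Tendsto (fun s : ℝ => (1 - Real.exp (-s)) + Real.exp (-s)) atTop (𝓝 1) := by
    have h1 : Tendsto (fun s : ℝ => Real.exp (-s)) atTop (𝓝 0) :=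
      Real.tendsto_exp_atBot.comp tendsto_neg_atTop_atBot
    have := hlo.add h1
    simpa using this
  apply tendsto_of_tendsto_of_tendsto_of_le_of_le' hlo hhi
  · filter_upwards [eventually_gt_atTop 0] with s hs
    exact (hbnds s hs).1
  · filter_upwards [eventually_gt_atTop 0] with s hs
    exact (hbnds s hs).2

lemma ein_lim_inf :
    Tendsto (fun s : ℝ => (∫ t in (0:ℝ)..s, (1 - Real.exp (-t))/t) - Real.log s)
      atTop (𝓝 Real.eulerMascheroniConstant) := by
  have hEeq : ∀ s : ℝ, 1 ≤ s →
      (∫ t in (0:ℝ)..s, (1 - Real.exp (-t))/t) - Real.log s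
        = (∫ t in (0:ℝ)..1, (1 - Real.exp (-t))/t) - ∫ t in (1:ℝ)..s, Real.exp (-t)/t := by
    intro s hs
    have hs0 : (0:ℝ) < s := by linarith
    have hiiA : IntervalIntegrable (fun t : ℝ => (1 - Real.exp (-t))/t) volume 1 s := by
      apply ContinuousOn.intervalIntegrable
      apply ContinuousOn.div (by fun_prop) continuousOn_id
      intro t ht
      rw [Set.uIcc_of_le hs] at ht
      exact ne_of_gt (lt_of_lt_of_le zero_lt_one ht.1)
    have hiiB : IntervalIntegrable (fun t : ℝ => Real.exp (-t)/t) volume 1 s := by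
      apply ContinuousOn.intervalIntegrable
      apply ContinuousOn.div (by fun_prop) continuousOn_id
      intro t ht
      rw [Set.uIcc_of_le hs] at ht
      exact ne_of_gt (lt_of_lt_of_le zero_lt_one ht.1)
    have hiiC : IntervalIntegrable (fun t : ℝ => 1/t) volume 1 s := by
      apply ContinuousOn.intervalIntegrable
      apply ContinuousOn.div continuousOn_const continuousOn_id
      intro t ht
      rw [Set.uIcc_of_le hs] at ht
      exact ne_of_gt (lt_of_lt_of_le zero_lt_one ht.1)
    have hadj : (∫ t in (0:ℝ)..s, (1 - Real.exp (-t))/t)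
        = (∫ t in (0:ℝ)..1, (1 - Real.exp (-t))/t) + ∫ t in (1:ℝ)..s, (1 - Real.exp (-t))/t := by
      rw [intervalIntegral.integral_add_adjacent_intervals (ein_intInt 1 zero_le_one) hiiA]
    have hsub : ∫ t in (1:ℝ)..s, (1 - Real.exp (-t))/t
        = (∫ t in (1:ℝ)..s, 1/t) - ∫ t in (1:ℝ)..s, Real.exp (-t)/t := by
      rw [← intervalIntegral.integral_sub hiiC hiiB]
      apply intervalIntegral.integral_congr
      intro t _
      show (1 - Real.exp (-t))/t = 1/t - Real.exp (-t)/t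
      rw [sub_div]
    have hlog : ∫ t in (1:ℝ)..s, 1/t = Real.log s := by
      rw [integral_one_div]
      · rw [div_one]
      · rw [Set.uIcc_of_le hs]
        intro h
        exact absurd h.1 (by norm_num)
    rw [hadj, hsub, hlog]
    ring
  have htend : Tendsto (fun s : ℝ => ∫ t in (1:ℝ)..s, Real.exp (-t)/t) atTop
      (𝓝 (∫ t in Set.Ioi (1:ℝ), Real.exp (-t)/t)) :=
    intervalIntegral_tendsto_integral_Ioi 1 expdiv_integrable tendsto_id
  have := (htend.const_sub (∫ t in (0:ℝ)..1, (1 - Real.exp (-t))/t)).congr'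
    (by filter_upwards [eventually_ge_atTop 1] with s hs; exact (hEeq s hs).symm)
  rw [← gamma_id] at this
  exact this
end rho
end Aux

section Main
open intervalIntegral Real Set Topology

/-- Let `ρ` be the Dickman function. Then `∫_{0}^{∞} ρ(u) du = e^{γ}`. -/
theorem dickman_integral_eq_exp_gamma
    (ρ : ℝ → ℝ) (hρc : Continuous ρ)
    (hρ1 : ∀ x : ℝ, x ≤ 1 → ρ x = 1)
    (hρdiff : ∀ x : ℝ, 1 < x → DifferentiableAt ℝ ρ x)
    (hρeq : ∀ x : ℝ, 1 < x → x * deriv ρ x = -ρ (x - 1)) :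
    ∫ u in Set.Ioi (0 : ℝ), ρ u = Real.exp Real.eulerMascheroniConstant := by
  set J : ℝ := ∫ u in Set.Ioi (0:ℝ), ρ u with hJdef
  have hJ : ∫ u in Set.Ioi (0:ℝ), Real.exp (-((0:ℝ)*u)) * ρ u = J := by
    rw [hJdef]
    apply setIntegral_congr_fun measurableSet_Ioi
    intro u _
    show Real.exp (-((0:ℝ)*u)) * ρ u = ρ u
    norm_num
  have hJpos : 0 < J := by
    have := lap_pos hρc hρ1 hρdiff hρeq 0 le_rfl
    rwa [hJ] at this
  set H : ℝ → ℝ := fun x => Real.log (∫ u in Set.Ioi (0:ℝ), Real.exp (-(x*u)) * ρ u)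
      + ∫ t in (0:ℝ)..x, (1 - Real.exp (-t))/t with hHdef
  -- limit at infinity
  have hHtop : Tendsto H atTop (𝓝 Real.eulerMascheroniConstant) := by
    have base := ((Real.continuousAt_log one_ne_zero).tendsto.comp
      (lap_lim_sF hρc hρ1 hρdiff hρeq)).add (ein_lim_inf hρc hρ1 hρdiff hρeq)
    rw [Real.log_one, zero_add] at base
    apply base.congr'
    filter_upwards [eventually_ge_atTop 1] with s hs
    have hs0 : (0:ℝ) < s := by linarith
    have hFpos := lap_pos hρc hρ1 hρdiff hρeq s hs0.le
    show Real.log (s * ∫ u in Set.Ioi (0:ℝ), Real.exp (-(s*u)) * ρ u)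
        + ((∫ t in (0:ℝ)..s, (1 - Real.exp (-t))/t) - Real.log s) = H s
    rw [Real.log_mul hs0.ne' hFpos.ne', hHdef]
    ring
  have hconst1 : ∀ᶠ s in atTop, H s = H 1 := by
    filter_upwards [eventually_ge_atTop 1] with s hs
    exact (lap_H_const hρc hρ1 hρdiff hρeq 1 s zero_lt_one hs).symm
  have hH1γ : H 1 = Real.eulerMascheroniConstant :=
    tendsto_nhds_unique tendsto_const_nhds (hHtop.congr' hconst1)
  -- limit at zero
  have hHzero : Tendsto H (𝓝[>] (0:ℝ)) (𝓝 (Real.log J)) := by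
    have base := ((Real.continuousAt_log hJpos.ne').tendsto.comp
      (lap_lim_zero hρc hρ1 hρdiff hρeq)).add (ein_lim_zero hρc hρ1 hρdiff hρeq)
    rw [add_zero] at base
    exact base
  have hconst2 : ∀ᶠ s in 𝓝[>] (0:ℝ), H s = H 1 := by
    filter_upwards [Ioo_mem_nhdsGT_of_mem (Set.mem_Ico.2 ⟨le_rfl, zero_lt_one⟩)] with s hs
    exact lap_H_const hρc hρ1 hρdiff hρeq s 1 hs.1 hs.2.le
  have hH1J : H 1 = Real.log J :=
    tendsto_nhds_unique tendsto_const_nhds (hHzero.congr' hconst2)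
  have : Real.log J = Real.eulerMascheroniConstant := by rw [← hH1J, hH1γ]
  rw [← Real.exp_log hJpos, this]

end Main
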